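/- With the hypotheses of the classification theorem (p^m ≡ 3 mod 4, α a non-square, β ≠ 0), the ideal C = ⟨(x²+γx+γ²/2)^i (x²-γx+γ²/2)^j⟩ of 𝓡 = R[x]/⟨x^{4p^s}-(α+βu)⟩ has cardinality p^{m(8p^s - 2i - 2j)}, for 0 ≤ i, j ≤ 2p^s. -/

import Mathlib

open Polynomial

/-- The chain ring `R = F_{p^m}[u]/⟨u²⟩`. -/
abbrev Ru (K : Type) [Field K] : Type := K[X] ⧸ Ideal.span {(X : K[X]) ^ 2}

noncomputable instance (K : Type) [Field K] : CommRing (Ru K) := Ideal.Quotient.commRing _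

/-- The element `u` of `R`. -/
noncomputable def uR (K : Type) [Field K] : Ru K :=
  Ideal.Quotient.mk _ (X : K[X])

/-- The natural inclusion of `F_{p^m}` into `R`. -/
noncomputable def tR (K : Type) [Field K] (a : K) : Ru K :=
  Ideal.Quotient.mk _ (C a : K[X])

/-- The ambient ring `R[x]/⟨xⁿ - λ⟩` of `λ`-constacyclic codes of length `n` over `R`. -/
abbrev RC (K : Type) [Field K] (lam : Ru K) (n : ℕ) : Type :=
  (Ru K)[X] ⧸ Ideal.span {(X : (Ru K)[X]) ^ n - C lam}

/-- The canonical projection `R[x] → R[x]/⟨xⁿ - λ⟩`. -/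
noncomputable def mkC (K : Type) [Field K] (lam : Ru K) (n : ℕ) :
    (Ru K)[X] →+* RC K lam n :=
  Ideal.Quotient.mk _

/-- The quadratic `x² + γx + γ²/2`, viewed over `R`. -/
noncomputable def qR (K : Type) [Field K] (g : K) : (Ru K)[X] :=
  X ^ 2 + C (tR K g) * X + C (tR K (g ^ 2 / 2))

lemma card_quot (R : Type*) [CommRing R] [Finite R] {f : R[X]} (hf : f.Monic) :
    Finite (R[X] ⧸ Ideal.span {f}) ∧
    Nat.card (R[X] ⧸ Ideal.span {f}) = Nat.card R ^ f.natDegree := by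
  let pb := AdjoinRoot.powerBasis' hf
  have e : AdjoinRoot f ≃ (Fin pb.dim → R) := pb.basis.equivFun.toEquiv
  have hdim : pb.dim = f.natDegree := rfl
  constructor
  · exact Finite.of_equiv _ e.symm
  · rw [show (R[X] ⧸ Ideal.span {f}) = AdjoinRoot f from rfl, Nat.card_congr e,
      Nat.card_pi, Finset.prod_const, Finset.card_univ, Fintype.card_fin, hdim]

lemma card_span_mk (K : Type*) [Field K] [Finite K] {f g : K[X]} (hf : f ≠ 0) (hg : g.Monic) :
    Nat.card (Ideal.span {Ideal.Quotient.mk (Ideal.span {f * g}) f}) =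
      Nat.card K ^ g.natDegree := by
  set I := Ideal.span {f * g}
  let φ : K[X] →ₗ[K[X]] (K[X] ⧸ I) := I.mkQ.comp (LinearMap.mulLeft K[X] f)
  have hφ : ∀ x, φ x = Ideal.Quotient.mk I (f * x) := fun x => rfl
  have hker : LinearMap.ker φ = Ideal.span {g} := by
    ext x
    simp only [LinearMap.mem_ker, Ideal.mem_span_singleton, hφ]
    rw [Ideal.Quotient.eq_zero_iff_mem, Ideal.mem_span_singleton]
    exact ⟨fun h => (mul_dvd_mul_iff_left hf).mp h, fun h => mul_dvd_mul_left f h⟩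
  have hrange : (LinearMap.range φ : Set (K[X] ⧸ I)) =
      (Ideal.span {Ideal.Quotient.mk I f} : Ideal (K[X] ⧸ I)) := by
    ext x
    simp only [SetLike.mem_coe, LinearMap.mem_range, Ideal.mem_span_singleton]
    constructor
    · rintro ⟨y, rfl⟩; exact ⟨Ideal.Quotient.mk I y, by rw [hφ, map_mul]⟩
    · rintro ⟨c, rfl⟩
      obtain ⟨y, rfl⟩ := Ideal.Quotient.mk_surjective (I := I) c
      exact ⟨y, by rw [hφ, map_mul]⟩
  have e1 : (K[X] ⧸ LinearMap.ker φ) ≃ₗ[K[X]] LinearMap.range φ := φ.quotKerEquivRange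
  rw [hker] at e1
  calc Nat.card (Ideal.span {Ideal.Quotient.mk I f})
      = Nat.card (LinearMap.range φ) := (Nat.card_congr (Equiv.setCongr hrange)).symm
    _ = Nat.card (K[X] ⧸ Ideal.span {g}) := (Nat.card_congr e1.toEquiv).symm
    _ = Nat.card K ^ g.natDegree := (card_quot K hg).2

lemma card_span_equiv {A B : Type*} [CommRing A] [CommRing B] (e : A ≃+* B) (a : A) :
    Nat.card (Ideal.span {e a} : Ideal B) = Nat.card (Ideal.span {a} : Ideal A) := by
  refine Nat.card_congr (Equiv.symm ?_)
  refine ⟨fun x => ⟨e x, ?_⟩, fun y => ⟨e.symm y, ?_⟩, fun x => by simp, fun y => by simp⟩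
  · obtain ⟨r, hr⟩ := Ideal.mem_span_singleton.mp x.2
    exact Ideal.mem_span_singleton.mpr ⟨e r, by rw [hr, map_mul]⟩
  · obtain ⟨r, hr⟩ := Ideal.mem_span_singleton.mp y.2
    exact Ideal.mem_span_singleton.mpr ⟨e.symm r, by rw [hr, map_mul, RingEquiv.symm_apply_apply]⟩

lemma card_span_mk' (K : Type*) [Field K] [Finite K] {f g M : K[X]} (hf : f ≠ 0) (hg : g.Monic)
    (hM : M = f * g) :
    Nat.card (Ideal.span {Ideal.Quotient.mk (Ideal.span {M}) f}) =
      Nat.card K ^ g.natDegree := by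
  subst hM; exact card_span_mk K hf hg

theorem stmt13 (p s m : ℕ) (hp : p.Prime) (hodd : Odd p) (hs : 0 < s) (hm : 0 < m)
    (K : Type) [Field K] [Fintype K] (hK : Fintype.card K = p ^ m)
    (h3 : p ^ m % 4 = 3) (α β : K) (hα : α ≠ 0) (hns : ¬ IsSquare α) (hβ : β ≠ 0)
    (α₀ : K) (hα₀ : α₀ ^ p ^ s = α) (γ : K) (hγ : γ ^ 4 = -4 * α₀) :
    ∀ i j : ℕ, i ≤ 2 * p ^ s → j ≤ 2 * p ^ s →
      Nat.card (Ideal.span {mkC K (tR K α + tR K β * uR K) (4 * p ^ s)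
          (qR K γ ^ i * qR K (-γ) ^ j)} :
        Ideal (RC K (tR K α + tR K β * uR K) (4 * p ^ s))) =
      p ^ (m * (8 * p ^ s - 2 * i - 2 * j)) := by
  intro i j hi hj
  -- characteristic
  haveI hcharp : CharP K p := by
    set q := ringChar K with hq
    haveI : CharP K q := ringChar.charP K
    obtain ⟨n, hqp, hcard⟩ := FiniteField.card K q
    have hpq : p = q := by
      have h1 : p ∣ q ^ (n : ℕ) := by
        rw [← hcard, hK]; exact dvd_pow_self p hm.ne'
      exact (Nat.prime_dvd_prime_iff_eq hp hqp).mp (hp.dvd_of_dvd_pow h1)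
    rwa [hpq]
  haveI : Fact p.Prime := ⟨hp⟩
  haveI : CharP K[X] p := charP_of_injective_ringHom (C_injective (R := K)) p
  have h2 : (2 : K) ≠ 0 := by
    intro h
    have := (CharP.cast_eq_zero_iff K p 2).mp (by exact_mod_cast h)
    have := (Nat.prime_dvd_prime_iff_eq hp Nat.prime_two).mp this
    rcases hodd with ⟨k, hk⟩; omega
  -- notation
  set P : ℕ := p ^ s with hP
  have hPpos : 0 < P := pow_pos hp.pos s
  set lam : Ru K := tR K α + tR K β * uR K with hlam
  set Q : K[X] := X ^ 2 + C γ * X + C (γ ^ 2 / 2) with hQdef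
  set Q' : K[X] := X ^ 2 + C (-γ) * X + C ((-γ) ^ 2 / 2) with hQ'def
  set Fp : K[X] := X ^ 4 - C α₀ with hFdef
  have hQQ' : Q * Q' = Fp := by
    rw [hQdef, hQ'def, hFdef]
    have e2 : (C (γ^2) : K[X]) = C 2 * C (γ^2/2) := by
      rw [← C_mul]; congr 1; field_simp
    have e3 : (C (γ^2/2) : K[X]) * C (γ^2/2) = - C α₀ := by
      rw [← C_mul, ← C_neg]; congr 1
      field_simp
      linear_combination hγ
    have e4 : (C (-γ) : K[X]) = - C γ := by rw [C_neg]
    have e5 : ((-γ:K)^2/2) = γ^2/2 := by ring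
    have e6 : (C γ : K[X])^2 = C (γ^2) := by rw [← C_pow]
    have e7 : (C 2 : K[X]) = 2 := map_ofNat C 2
    rw [e4, e5]
    linear_combination (X:K[X])^2 * e2.symm + e3 + (-(X:K[X])^2) * e6 +
      (-(X:K[X])^2 * C (γ^2/2)) * e7
  -- Frobenius identity
  have hFrob : Fp ^ P = X ^ (4 * P) - C α := by
    rw [hFdef, hP, sub_pow_char_pow, ← C_pow, ← pow_mul, mul_comm (4:ℕ) (p^s), ← hP, hα₀,
      mul_comm P 4]
  set IB : Ideal K[X] := Ideal.span {Fp ^ (2*P)} with hIB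
  set Bq := K[X] ⧸ IB with hBq
  set mkB : K[X] →+* Bq := Ideal.Quotient.mk IB with hmkB
  set b : Bq := mkB (C β⁻¹ * Fp ^ P) with hbdef
  have hb2 : b ^ 2 = 0 := by
    rw [hbdef, ← map_pow, Ideal.Quotient.eq_zero_iff_mem]
    exact Ideal.mem_span_singleton.mpr ⟨C β⁻¹ ^ 2, by rw [mul_pow, ← pow_mul]; ring⟩
  let χ : Ru K →+* Bq := Ideal.Quotient.lift (Ideal.span {(X:K[X])^2}) (aeval b).toRingHom
    (by
      intro a ha
      obtain ⟨c, rfl⟩ := Ideal.mem_span_singleton.mp ha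
      simp only [AlgHom.toRingHom_eq_coe, RingHom.coe_coe, map_mul, map_pow, aeval_X, hb2,
        zero_mul])
  have hχt : ∀ a : K, χ (tR K a) = mkB (C a) := by
    intro a
    show χ (Ideal.Quotient.mk _ (C a)) = _
    rw [Ideal.Quotient.lift_mk]
    simp only [AlgHom.toRingHom_eq_coe, RingHom.coe_coe, aeval_C]
    rfl
  have hχu : χ (uR K) = b := by
    show χ (Ideal.Quotient.mk _ (X : K[X])) = b
    rw [Ideal.Quotient.lift_mk]
    simp only [AlgHom.toRingHom_eq_coe, RingHom.coe_coe, aeval_X]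
  let ψ : (Ru K)[X] →+* Bq := eval₂RingHom χ (mkB X)
  have hψC : ∀ r : Ru K, ψ (C r) = χ r := fun r => eval₂_C _ _
  have hψX : ψ X = mkB X := eval₂_X _ _
  have hgen : ψ ((X:(Ru K)[X]) ^ (4*P) - C lam) = 0 := by
    rw [map_sub, map_pow, hψX, hψC, ← map_pow, hlam, map_add, map_mul, hχt, hχt, hχu, hbdef,
      ← map_mul, ← map_add]
    have : C β * (C β⁻¹ * Fp ^ P) = Fp ^ P := by
      rw [← mul_assoc, ← C_mul, mul_inv_cancel₀ hβ, C_1, one_mul]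
    rw [this]
    have hX4P : (X:K[X]) ^ (4*P) = C α + Fp ^ P := by rw [hFrob]; ring
    rw [hX4P, sub_self]
  let Ψ : RC K lam (4*P) →+* Bq := Ideal.Quotient.lift _ ψ (by
    intro a ha
    obtain ⟨c, rfl⟩ := Ideal.mem_span_singleton.mp ha
    rw [map_mul, hgen, zero_mul])
  let ιR : K →+* Ru K := (Ideal.Quotient.mk _).comp (C : K →+* K[X])
  have hcomm : ∀ f : K[X], Ψ (mkC K lam (4*P) (f.map ιR)) = mkB f := by
    have key : Ψ.comp ((mkC K lam (4*P)).comp (mapRingHom ιR)) = mkB := by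
      apply Polynomial.ringHom_ext
      · intro a
        show Ψ (mkC K lam (4*P) (mapRingHom ιR (C a))) = mkB (C a)
        rw [coe_mapRingHom, Polynomial.map_C]
        show Ψ (Ideal.Quotient.mk _ (C (ιR a))) = mkB (C a)
        rw [Ideal.Quotient.lift_mk, hψC]
        exact hχt a
      · show Ψ (mkC K lam (4*P) (mapRingHom ιR X)) = mkB X
        rw [coe_mapRingHom, Polynomial.map_X]
        show Ψ (Ideal.Quotient.mk _ (X : (Ru K)[X])) = mkB X
        rw [Ideal.Quotient.lift_mk, hψX]
    intro f
    exact DFunLike.congr_fun key f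
  have hcK : Nat.card K = p ^ m := by rw [Nat.card_eq_fintype_card, hK]
  have hcK2 : 1 < Nat.card K := by
    rw [Nat.card_eq_fintype_card]; exact Fintype.one_lt_card
  obtain ⟨finRu, cardRu⟩ := card_quot K (monic_X_pow 2 (R := K))
  haveI := finRu
  haveI hntRu : Nontrivial (Ru K) := by
    rw [← Finite.one_lt_card_iff_nontrivial]
    rw [show (Ru K) = (K[X] ⧸ Ideal.span {(X:K[X])^2}) from rfl, cardRu, natDegree_X_pow]
    exact Nat.one_lt_pow (by norm_num) hcK2
  obtain ⟨finR, cardR⟩ := card_quot (Ru K)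
    (monic_X_pow_sub_C lam (n := 4*P) (by positivity))
  haveI := finR
  have hFm : Fp.Monic := by rw [hFdef]; exact monic_X_pow_sub_C α₀ (by norm_num)
  obtain ⟨finB, cardB⟩ := card_quot K (hFm.pow (2*P))
  haveI := finB
  have hcards : Nat.card (RC K lam (4*P)) = Nat.card Bq := by
    rw [show (RC K lam (4*P)) = ((Ru K)[X] ⧸ Ideal.span {(X:(Ru K)[X])^(4*P) - C lam}) from rfl,
      cardR, hBq, hIB, cardB, cardRu, natDegree_X_pow, natDegree_X_pow_sub_C, hFdef,
      natDegree_pow, natDegree_X_pow_sub_C, ← pow_mul]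
    ring_nf
  have hsurj : Function.Surjective Ψ := by
    intro y
    obtain ⟨f, rfl⟩ := Ideal.Quotient.mk_surjective (I := IB) y
    exact ⟨mkC K lam (4*P) (f.map ιR), hcomm f⟩
  have hbij : Function.Bijective Ψ :=
    (Nat.bijective_iff_surjective_and_card Ψ).mpr ⟨hsurj, hcards⟩
  let E : RC K lam (4*P) ≃+* Bq := RingEquiv.ofBijective Ψ hbij
  have hq1 : qR K γ = Q.map ιR := by
    rw [hQdef, qR]
    simp only [Polynomial.map_add, Polynomial.map_pow, Polynomial.map_mul, Polynomial.map_X,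
      Polynomial.map_C]
    rfl
  have hq2 : qR K (-γ) = Q'.map ιR := by
    rw [hQ'def, qR]
    simp only [Polynomial.map_add, Polynomial.map_pow, Polynomial.map_mul, Polynomial.map_X,
      Polynomial.map_C]
    rfl
  have helem : E (mkC K lam (4*P) (qR K γ ^ i * qR K (-γ) ^ j)) = mkB (Q ^ i * Q' ^ j) := by
    show Ψ (mkC K lam (4*P) (qR K γ ^ i * qR K (-γ) ^ j)) = mkB (Q ^ i * Q' ^ j)
    rw [hq1, hq2, ← Polynomial.map_pow, ← Polynomial.map_pow, ← Polynomial.map_mul]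
    exact hcomm _
  have htrans := card_span_equiv E (mkC K lam (4*P) (qR K γ ^ i * qR K (-γ) ^ j))
  rw [helem] at htrans
  rw [← htrans]
  -- now count in Bq
  have hQm : Q.Monic := by
    rw [hQdef, add_assoc]
    exact monic_X_pow_add (by exact (degree_linear_le).trans_lt (by norm_num))
  have hQ'm : Q'.Monic := by
    rw [hQ'def, add_assoc]
    exact monic_X_pow_add (by exact (degree_linear_le).trans_lt (by norm_num))
  have hQdeg : Q.natDegree = 2 := by rw [hQdef]; compute_degree!
  have hQ'deg : Q'.natDegree = 2 := by rw [hQ'def]; compute_degree!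
  have hf0 : Q ^ i * Q' ^ j ≠ 0 := ((hQm.pow i).mul (hQ'm.pow j)).ne_zero
  have hg0m : (Q ^ (2*P - i) * Q' ^ (2*P - j)).Monic := (hQm.pow _).mul (hQ'm.pow _)
  have hfg : (Q ^ i * Q' ^ j) * (Q ^ (2*P - i) * Q' ^ (2*P - j)) = Fp ^ (2*P) := by
    rw [← hQQ', mul_pow, show Q ^ i * Q' ^ j * (Q ^ (2*P - i) * Q' ^ (2*P - j)) =
      (Q ^ i * Q ^ (2*P - i)) * (Q' ^ j * Q' ^ (2*P - j)) from by ring,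
      ← pow_add, ← pow_add, Nat.add_sub_cancel' hi, Nat.add_sub_cancel' hj]
  show Nat.card
      (Ideal.span {Ideal.Quotient.mk (Ideal.span {Fp ^ (2*P)}) (Q ^ i * Q' ^ j)}) = _
  rw [card_span_mk' K hf0 hg0m hfg.symm,
    natDegree_mul (hQm.pow (2*P - i)).ne_zero (hQ'm.pow (2*P - j)).ne_zero,
    natDegree_pow, natDegree_pow, hQdeg, hQ'deg, hcK, ← pow_mul]
  have harith : (2 * P - i) * 2 + (2 * P - j) * 2 = 8 * P - 2 * i - 2 * j := by omega
  rw [harith]
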